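/- An order filter F on D = M →₀ ℕ is a prime filter if and only if Supp(F) is a prime order filter on L = Finset M. -/

import Mathlib

/-- An order filter on a lattice `P`: a nonempty subset that is upward closed and
closed under binary meets. -/
def IsOrderFilter {P : Type*} [Lattice P] (F : Set P) : Prop :=
  F.Nonempty ∧ (∀ a ∈ F, ∀ b : P, a ≤ b → b ∈ F) ∧ (∀ a ∈ F, ∀ b ∈ F, a ⊓ b ∈ F)

/-- A prime order filter on a lattice `P`: a proper order filter `F` such that
`a ⊔ b ∈ F` implies `a ∈ F` or `b ∈ F`. -/
def IsPrimeOrderFilter {P : Type*} [Lattice P] (F : Set P) : Prop :=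
  IsOrderFilter F ∧ F ≠ Set.univ ∧ ∀ a b : P, a ⊔ b ∈ F → a ∈ F ∨ b ∈ F

/-- A maximal order filter on a lattice `P`: a proper order filter that is maximal
under inclusion among proper order filters. -/
def IsMaximalOrderFilter {P : Type*} [Lattice P] (F : Set P) : Prop :=
  IsOrderFilter F ∧ F ≠ Set.univ ∧
    ∀ G : Set P, IsOrderFilter G → G ≠ Set.univ → F ⊆ G → G = F

/-- The characteristic function `ch S : M →₀ ℕ` of a finite set `S`,
with `(ch S) m = 1` if `m ∈ S` and `0` otherwise. -/
noncomputable def chFun {M : Type*} (S : Finset M) : M →₀ ℕ :=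
  Finsupp.indicator S (fun _ _ => 1)

/-- `Supp F = {supp f | f ∈ F}`, where `supp f = {m | f m ≠ 0}` is the support of
a finitely supported function `f : M →₀ ℕ`. -/
def SuppFilter {M : Type*} (F : Set (M →₀ ℕ)) : Set (Finset M) :=
  Finsupp.support '' F

/-- `Ch 𝒮 = {f : M →₀ ℕ | ∃ S ∈ 𝒮, ch S ≤ f}`. -/
noncomputable def ChFilter {M : Type*} (𝒮 : Set (Finset M)) : Set (M →₀ ℕ) :=
  {f : M →₀ ℕ | ∃ S ∈ 𝒮, chFun S ≤ f}

lemma chFun_support {M : Type*} [DecidableEq M] (S : Finset M) : (chFun S).support = S := by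
  ext m
  by_cases h : m ∈ S <;>
    simp [chFun, Finsupp.mem_support_iff, Finsupp.indicator_apply, h]

lemma exists_singleton_mem {M : Type*} [DecidableEq M] {𝒮 : Set (Finset M)}
    (hne : (∅ : Finset M) ∉ 𝒮)
    (hprime : ∀ a b : Finset M, a ⊔ b ∈ 𝒮 → a ∈ 𝒮 ∨ b ∈ 𝒮) :
    ∀ S : Finset M, S ∈ 𝒮 → ∃ m, ({m} : Finset M) ∈ 𝒮 := by
  intro S
  induction S using Finset.strongInduction with
  | _ S ih =>
    intro hS
    have hSne : S.Nonempty := by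
      rcases S.eq_empty_or_nonempty with h | h
      · exact absurd (h ▸ hS) hne
      · exact h
    obtain ⟨a, ha⟩ := hSne
    have hdecomp : ({a} : Finset M) ⊔ S.erase a = S := by
      rw [Finset.sup_eq_union]
      simpa using Finset.insert_erase ha
    rcases hprime _ _ (hdecomp ▸ hS) with h | h
    · exact ⟨a, h⟩
    · exact ih (S.erase a) (Finset.erase_ssubset ha) h

/-- An order filter `F` on `D = M →₀ ℕ` is a prime filter if and only if `Supp F`
is a prime order filter on `L = Finset M`. -/
theorem isPrime_iff_suppFilter_isPrime (M : Type*) [DecidableEq M]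
    (F : Set (M →₀ ℕ)) (hF : IsOrderFilter F) :
    IsPrimeOrderFilter F ↔ IsPrimeOrderFilter (SuppFilter F) := by
  obtain ⟨hne, hup, hmeet⟩ := hF
  have hSuppFilter : IsOrderFilter (SuppFilter F) := by
    obtain ⟨f0, hf0⟩ := hne
    refine ⟨⟨f0.support, ⟨f0, hf0, rfl⟩⟩, ?_, ?_⟩
    · rintro S ⟨f, hf, rfl⟩ T hST
      refine ⟨f ⊔ chFun T, hup f hf _ le_sup_left, ?_⟩
      rw [Finsupp.support_sup, chFun_support]
      exact Finset.union_eq_right.mpr hST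
    · rintro S ⟨f, hf, rfl⟩ T ⟨g, hg, rfl⟩
      refine ⟨f ⊓ g, hmeet f hf g hg, ?_⟩
      rw [Finsupp.support_inf, Finset.inf_eq_inter]
  have huniv : F = Set.univ → SuppFilter F = Set.univ := by
    intro h
    ext S
    simp only [Set.mem_univ, iff_true]
    exact ⟨chFun S, h ▸ Set.mem_univ _, chFun_support S⟩
  constructor
  · rintro ⟨-, hproper, hprime⟩
    refine ⟨hSuppFilter, ?_, ?_⟩
    · intro h
      apply hproper
      have : (∅ : Finset M) ∈ SuppFilter F := h ▸ Set.mem_univ _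
      obtain ⟨f, hf, hfs⟩ := this
      have hf0 : f = 0 := Finsupp.support_eq_empty.mp hfs
      ext g
      simp only [Set.mem_univ, iff_true]
      exact hup f hf g (hf0 ▸ (zero_le : 0 ≤ g))
    · rintro S T ⟨f, hf, hfsupp⟩
      rw [Finset.sup_eq_union] at hfsupp
      have key : f.filter (· ∈ S) ⊔ f.filter (· ∈ T) = f := by
        ext m
        rw [Finsupp.sup_apply]
        by_cases hS : m ∈ S
        · by_cases hT : m ∈ T <;>
            simp [Finsupp.filter_apply_pos, Finsupp.filter_apply_neg, hS, hT]
        · by_cases hT : m ∈ T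
          · simp [Finsupp.filter_apply_pos, Finsupp.filter_apply_neg, hS, hT]
          · have hfm : f m = 0 := by
              by_contra hm
              have := Finsupp.mem_support_iff.mpr hm
              rw [hfsupp, Finset.mem_union] at this
              tauto
            simp [Finsupp.filter_apply_neg, hS, hT, hfm]
      rcases hprime _ _ (key ▸ hf) with h | h
      · left
        refine ⟨f.filter (· ∈ S), h, ?_⟩
        rw [Finsupp.support_filter, hfsupp]
        ext m
        simp only [Finset.mem_filter, Finset.mem_union]
        tauto
      · right
        refine ⟨f.filter (· ∈ T), h, ?_⟩
        rw [Finsupp.support_filter, hfsupp]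
        ext m
        simp only [Finset.mem_filter, Finset.mem_union]
        tauto
  · rintro ⟨hSF, hSproper, hSprime⟩
    have h0 : (0 : M →₀ ℕ) ∉ F := by
      intro h0
      apply hSproper
      apply huniv
      ext g
      simp only [Set.mem_univ, iff_true]
      exact hup 0 h0 g (zero_le : 0 ≤ g)
    have hempty : (∅ : Finset M) ∉ SuppFilter F := by
      rintro ⟨f, hf, hfs⟩
      exact h0 (Finsupp.support_eq_empty.mp hfs ▸ hf)
    obtain ⟨S, hS⟩ := hSF.1
    obtain ⟨m₀, hm₀⟩ := exists_singleton_mem hempty hSprime S hS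
    obtain ⟨k, hk, hks⟩ := hm₀
    have hklem : ∀ m, m ≠ m₀ → k m = 0 := by
      intro m hm
      rw [← Finsupp.notMem_support_iff, hks]
      simp [hm]
    refine ⟨⟨⟨k, hk⟩, hup, hmeet⟩, fun h => h0 (h ▸ Set.mem_univ 0), ?_⟩
    intro f g hfg
    have hmem : m₀ ∈ (f ⊔ g).support := by
      have h1 : (f ⊔ g).support ∈ SuppFilter F := ⟨_, hfg, rfl⟩
      have h2 := hSF.2.2 _ h1 _ ⟨k, hk, hks⟩
      by_contra hm
      apply hempty
      have heq : (f ⊔ g).support ⊓ ({m₀} : Finset M) = ∅ := by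
        rw [Finset.inf_eq_inter]
        ext x
        simp only [Finset.mem_inter, Finset.mem_singleton, Finset.notMem_empty, iff_false]
        rintro ⟨hx, rfl⟩
        exact hm hx
      rw [heq] at h2
      exact h2
    have hk0 : k m₀ ≠ 0 := Finsupp.mem_support_iff.mp (hks ▸ Finset.mem_singleton_self m₀)
    set n := (f ⊔ g) m₀ with hn
    have hn1 : 1 ≤ n := by
      have := Finsupp.mem_support_iff.mp hmem
      omega
    have hnk : n • k ∈ F := by
      refine hup k hk _ (Finsupp.le_def.mpr fun m => ?_)
      rw [Finsupp.smul_apply, smul_eq_mul]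
      exact Nat.le_mul_of_pos_left _ hn1
    have he : (f ⊔ g) ⊓ (n • k) ∈ F := hmeet _ hfg _ hnk
    have hbound : ∀ u : M →₀ ℕ, (f ⊔ g) m₀ = u m₀ → u ∈ F := by
      intro u hu
      refine hup _ he u (Finsupp.le_def.mpr fun m => ?_)
      rw [Finsupp.inf_apply]
      by_cases hm : m = m₀
      · subst hm
        exact le_trans inf_le_left (le_of_eq hu)
      · have hkm : k m = 0 := hklem m hm
        simp [Finsupp.smul_apply, hkm]
    rcases le_total (g m₀) (f m₀) with hle | hle
    · left
      refine hbound f ?_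
      rw [Finsupp.sup_apply]
      exact sup_eq_left.mpr hle
    · right
      refine hbound g ?_
      rw [Finsupp.sup_apply]
      exact sup_eq_right.mpr hle
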